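/- Let Γ = (V, E) be a finite simple graph whose complement Γ̄ is connected. Then the geodesic automaton 𝓑 of Γ, restricted to its nonempty states, is strongly connected: for any two nonempty cliques s and t of Γ there is a directed path of transitions from s to t. -/

import Mathlib

open Filter

noncomputable section

/-- A transition of the geodesic automaton of a graph `Γ`: from the state `s`
one may read a letter `v ∉ s` and move to the state `{v} ∪ (st(v) ∩ s)`. -/
def geoTrans {V : Type*} (Γ : SimpleGraph V) (s t : Set V) : Prop :=
  ∃ v : V, v ∉ s ∧ t = insert v (Γ.neighborSet v ∩ s)

/-- A transition of the shortlex automaton of `Γ` with respect to a linear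
order `lo` on the vertices: a geodesic transition reading `v` is kept only if
`st(v) ∩ s = ∅` or `v < min (st(v) ∩ s)`, i.e. `v` is smaller than every
element of `st(v) ∩ s`. -/
def slTrans {V : Type*} (Γ : SimpleGraph V) (lo : LinearOrder V) (s t : Set V) : Prop :=
  ∃ v : V, v ∉ s ∧ (∀ w ∈ Γ.neighborSet v ∩ s, lo.lt v w) ∧
    t = insert v (Γ.neighborSet v ∩ s)

/-- Reading a walk in the complement graph (whose first vertex is not in the
current state) from a state `s` leads to an explicitly described state. -/
lemma geo_read_walk {V : Type*} (Γ : SimpleGraph V) :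
    ∀ {a b : V} (p : Γᶜ.Walk a b) (s : Set V), a ∉ s →
      Relation.ReflTransGen (geoTrans Γ) s
        (insert b {y ∈ s | ∀ x ∈ p.support, Γ.Adj x y}) := by
  intro a b p
  induction p with
  | @nil a =>
    intro s ha
    refine Relation.ReflTransGen.single ⟨a, ha, ?_⟩
    ext y
    simp only [SimpleGraph.Walk.support_nil, List.mem_singleton, Set.mem_insert_iff,
      Set.mem_inter_iff, SimpleGraph.mem_neighborSet, Set.mem_setOf_eq, forall_eq]
    tauto
  | @cons a c b h p ih =>
    intro s ha
    obtain ⟨hne, hnadj⟩ := (SimpleGraph.compl_adj Γ a c).mp h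
    have hc1 : c ∉ insert a (Γ.neighborSet a ∩ s) := by
      simp only [Set.mem_insert_iff, Set.mem_inter_iff, SimpleGraph.mem_neighborSet]
      rintro (rfl | ⟨hadj, _⟩)
      · exact hne rfl
      · exact hnadj hadj
    have step : geoTrans Γ s (insert a (Γ.neighborSet a ∩ s)) := ⟨a, ha, rfl⟩
    have trail := ih (insert a (Γ.neighborSet a ∩ s)) hc1
    have heq : insert b {y ∈ insert a (Γ.neighborSet a ∩ s) | ∀ x ∈ p.support, Γ.Adj x y}
        = insert b {y ∈ s | ∀ x ∈ (SimpleGraph.Walk.cons h p).support, Γ.Adj x y} := by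
      ext y
      simp only [Set.mem_insert_iff, Set.mem_setOf_eq, Set.mem_inter_iff,
        SimpleGraph.mem_neighborSet, SimpleGraph.Walk.support_cons, List.mem_cons]
      constructor
      · rintro (rfl | ⟨(rfl | ⟨hadj, hys⟩), hall⟩)
        · exact Or.inl rfl
        · exact absurd (hall c p.start_mem_support) (fun hca => hnadj hca.symm)
        · refine Or.inr ⟨hys, ?_⟩
          rintro x (rfl | hx)
          · exact hadj
          · exact hall x hx
      · rintro (rfl | ⟨hys, hall⟩)
        · exact Or.inl rfl
        · exact Or.inr ⟨Or.inr ⟨hall a (Or.inl rfl), hys⟩,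
            fun x hx => hall x (Or.inr hx)⟩
    rw [heq] at trail
    exact Relation.ReflTransGen.head step trail

/-- In a connected graph one can find, between any two vertices, a walk passing
through any prescribed finite list of vertices. -/
lemma exists_walk_through {V : Type*} {G : SimpleGraph V} (hconn : G.Connected) :
    ∀ (l : List V) (a w : V), ∃ p : G.Walk a w, ∀ x ∈ l, x ∈ p.support := by
  intro l
  induction l with
  | nil =>
    intro a w
    obtain ⟨p⟩ := hconn.preconnected a w
    exact ⟨p, by simp⟩
  | cons z zs ih =>
    intro a w
    obtain ⟨q⟩ := hconn.preconnected a z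
    obtain ⟨p, hp⟩ := ih z w
    refine ⟨q.append p, ?_⟩
    intro x hx
    rcases List.mem_cons.mp hx with rfl | hx
    · exact (SimpleGraph.Walk.mem_support_append_iff _ _).mpr (Or.inl q.end_mem_support)
    · exact (SimpleGraph.Walk.mem_support_append_iff _ _).mpr (Or.inr (hp x hx))

/-- From a nonempty sub-clique of a clique `t` one can reach `t` by geodesic
transitions, inserting the missing vertices one at a time. -/
lemma geo_build {V : Type*} [Fintype V] (Γ : SimpleGraph V) (t : Set V)
    (ht : Γ.IsClique t) :
    ∀ (n : ℕ) (s : Set V), s ⊆ t → s.Nonempty → (t \ s).ncard = n →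
      Relation.ReflTransGen (geoTrans Γ) s t := by
  intro n
  induction n with
  | zero =>
    intro s hst hsne hcard
    have h0 : t \ s = ∅ := (Set.ncard_eq_zero (Set.toFinite _)).mp hcard
    have : s = t := Set.Subset.antisymm hst (fun y hy => by
      by_contra hys
      exact absurd h0 (Set.nonempty_iff_ne_empty.mp ⟨y, hy, hys⟩))
    exact this ▸ Relation.ReflTransGen.refl
  | succ n ih =>
    intro s hst hsne hcard
    have hne : (t \ s).Nonempty := by
      rw [Set.nonempty_iff_ne_empty]
      intro h
      rw [h] at hcard
      simp at hcard
    obtain ⟨v, hvt, hvs⟩ := hne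
    have hinter : Γ.neighborSet v ∩ s = s := by
      apply Set.inter_eq_self_of_subset_right
      intro y hy
      have hyt := hst hy
      have hyv : v ≠ y := fun h => hvs (h ▸ hy)
      exact ht hvt hyt hyv
    have step : geoTrans Γ s (insert v s) := ⟨v, hvs, by rw [hinter]⟩
    have hsub : insert v s ⊆ t := Set.insert_subset hvt hst
    have hcard' : (t \ insert v s).ncard = n := by
      have : t \ insert v s = (t \ s) \ {v} := by
        ext y; simp only [Set.mem_diff, Set.mem_insert_iff, Set.mem_singleton_iff]; tauto
      rw [this, Set.ncard_diff_singleton_of_mem (show v ∈ t \ s from ⟨hvt, hvs⟩), hcard]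
      rfl
    exact Relation.ReflTransGen.head step
      (ih (insert v s) hsub ⟨v, Set.mem_insert v s⟩ hcard')

theorem geodesic_strongly_connected
    {V : Type*} [Fintype V] (Γ : SimpleGraph V) (hconn : Γᶜ.Connected) :
    ∀ s t : Set V, Γ.IsClique s → s.Nonempty → Γ.IsClique t → t.Nonempty →
      Relation.ReflTransGen (geoTrans Γ) s t := by
  intro s t hs hsne ht htne
  obtain ⟨u, hu⟩ := hsne
  obtain ⟨v, hv⟩ := htne
  by_cases hV : ∃ a : V, a ≠ u
  · -- there are at least two vertices, so `u` has a neighbour in `Γᶜ`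
    obtain ⟨a, hau⟩ := hV
    obtain ⟨p0⟩ := hconn.preconnected u a
    -- extract a Γᶜ-neighbour of u
    have hex : ∃ c : V, Γᶜ.Adj u c := by
      cases p0 with
      | nil => exact absurd rfl hau.symm
      | cons h q => exact ⟨_, h⟩
    obtain ⟨c, hc⟩ := hex
    have hcs : c ∉ s := by
      intro hcsmem
      obtain ⟨hne, hnadj⟩ := (SimpleGraph.compl_adj Γ u c).mp hc
      exact hnadj (hs hu hcsmem hne)
    -- a walk in Γᶜ from c to v visiting every vertex of s
    obtain ⟨p, hp⟩ := exists_walk_through hconn (s.toFinite.toFinset.toList) c v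
    have hpall : ∀ x ∈ s, x ∈ p.support := by
      intro x hx
      exact hp x (by simpa using hx)
    -- reading this walk from s yields the singleton {v}
    have h1 := geo_read_walk Γ p s hcs
    have hempty : {y ∈ s | ∀ x ∈ p.support, Γ.Adj x y} = ∅ := by
      ext y
      simp only [Set.mem_setOf_eq, Set.mem_empty_iff_false, iff_false, not_and]
      intro hys hall
      exact Γ.irrefl (hall y (hpall y hys))
    rw [hempty] at h1
    have h2 := geo_build Γ t ht (t \ ({v} : Set V)).ncard {v}
      (Set.singleton_subset_iff.mpr hv) ⟨v, rfl⟩ rfl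
    have : (insert v (∅ : Set V)) = ({v} : Set V) := by simp
    rw [this] at h1
    exact h1.trans h2
  · -- V is a subsingleton with unique element u, so s = t = {u}
    have hall : ∀ x : V, x = u := by
      intro x
      by_contra h
      exact hV ⟨x, h⟩
    have hst : s = t := by
      ext x
      rw [hall x]
      constructor
      · intro _; exact (hall v) ▸ hv
      · intro _; exact hu
    exact hst ▸ Relation.ReflTransGen.refl
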